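/- (RKHS-norm-free simple regret of MVR with rescaled noise parameter.) Fix B > 0, c > 0, ρ ≥ 0, w ≥ 0 and T ∈ ℕ+. Set λ := √c / B and β^{1/2} := B + (ρ/λ)·w. Let x_1,…,x_T ∈ 𝒳 be chosen by maximum variance reduction with noise level λ²: for every t ∈ [T] and x ∈ 𝒳, σ_{λ²I_{t−1}}(x; X_{t−1}) ≤ σ_{λ²I_{t−1}}(x_t; X_{t−1}). Suppose γ ≥ 0 satisfies I_{λ²I_T}(Z) ≤ γ for every T-tuple Z of points of 𝒳, and T/2 ≥ 3γ. Let y ∈ ℝ^T and f : 𝒳 → ℝ satisfy |f(x) − μ_{λ²I_T}(x; X_T, y)| ≤ β^{1/2}·σ_{λ²I_T}(x; X_T) for all x ∈ 𝒳, and let x̂ ∈ 𝒳 satisfy μ_{λ²I_T}(x; X_T, y) ≤ μ_{λ²I_T}(x̂; X_T, y) for all x ∈ 𝒳. Then for every x* ∈ 𝒳: f(x*) − f(x̂) ≤ 8·(√c + ρ·w)·√(γ/T); in particular the bound does not depend on B. -/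

import Mathlib

open Matrix Real Finset

noncomputable section

universe u

/-- Gram (kernel) matrix of a finite tuple of points. -/
def gramMat {𝒳 : Type u} (k : 𝒳 → 𝒳 → ℝ) {m : ℕ} (X : Fin m → 𝒳) :
    Matrix (Fin m) (Fin m) ℝ :=
  Matrix.of fun i j => k (X i) (X j)

/-- Kernel vector `k(x, X)`. -/
def kVec {𝒳 : Type u} (k : 𝒳 → 𝒳 → ℝ) {m : ℕ} (X : Fin m → 𝒳) (x : 𝒳) : Fin m → ℝ :=
  fun i => k x (X i)

/-- Posterior variance `σ²_Σ(x; X)`. -/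
def postVar {𝒳 : Type u} (k : 𝒳 → 𝒳 → ℝ) {m : ℕ} (S : Matrix (Fin m) (Fin m) ℝ)
    (X : Fin m → 𝒳) (x : 𝒳) : ℝ :=
  k x x - kVec k X x ⬝ᵥ ((gramMat k X + S)⁻¹ *ᵥ kVec k X x)

/-- Posterior standard deviation `σ_Σ(x; X)`. -/
def postStd {𝒳 : Type u} (k : 𝒳 → 𝒳 → ℝ) {m : ℕ} (S : Matrix (Fin m) (Fin m) ℝ)
    (X : Fin m → 𝒳) (x : 𝒳) : ℝ :=
  Real.sqrt (postVar k S X x)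

/-- Posterior mean `μ_Σ(x; X, y)`. -/
def postMean {𝒳 : Type u} (k : 𝒳 → 𝒳 → ℝ) {m : ℕ} (S : Matrix (Fin m) (Fin m) ℝ)
    (X : Fin m → 𝒳) (y : Fin m → ℝ) (x : 𝒳) : ℝ :=
  kVec k X x ⬝ᵥ ((gramMat k X + S)⁻¹ *ᵥ y)

/-- Information gain `I_Σ(Z)`. -/
def infoGain {𝒳 : Type u} (k : 𝒳 → 𝒳 → ℝ) {m : ℕ} (S : Matrix (Fin m) (Fin m) ℝ)
    (Z : Fin m → 𝒳) : ℝ :=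
  (1 / 2) * Real.log ((S + gramMat k Z).det / S.det)

/-- `k` is a symmetric positive semidefinite kernel. -/
def IsKernel {𝒳 : Type u} (k : 𝒳 → 𝒳 → ℝ) : Prop :=
  (∀ x y, k x y = k y x) ∧ ∀ (m : ℕ) (Z : Fin m → 𝒳), (gramMat k Z).PosSemidef

/-- Prefix of length `t` of a sequence of points. -/
def preT {𝒳 : Type u} (x : ℕ → 𝒳) (t : ℕ) : Fin t → 𝒳 := fun i => x i.val

section MVRAuxiliary

variable {𝒳 : Type u}

lemma posDef_M (k : 𝒳 → 𝒳 → ℝ) (hk : IsKernel k) {m : ℕ} (X : Fin m → 𝒳)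
    {l : ℝ} (hl : 0 < l) :
    (gramMat k X + l • (1 : Matrix (Fin m) (Fin m) ℝ)).PosDef := by
  refine Matrix.PosDef.posSemidef_add (hk.2 m X) ?_
  refine Matrix.PosDef.of_dotProduct_mulVec_pos ?_ ?_
  · ext i j
    simp [Matrix.conjTranspose_apply, Matrix.smul_apply, Matrix.one_apply, eq_comm]
  · intro x hx
    have h1 : (l • (1 : Matrix (Fin m) (Fin m) ℝ)) *ᵥ x = l • x := by
      simp [Matrix.smul_mulVec]
    rw [h1]
    simp only [star_trivial, dotProduct_smul, smul_eq_mul]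
    have h2 : 0 ≤ x ⬝ᵥ x := by
      simpa [dotProduct] using Finset.sum_nonneg fun i _ => mul_self_nonneg (x i)
    have h3 : x ⬝ᵥ x ≠ 0 := fun h => hx (dotProduct_self_eq_zero.mp h)
    exact mul_pos hl (h2.lt_of_ne (Ne.symm h3))

lemma quad_le {m : ℕ} {M : Matrix (Fin m) (Fin m) ℝ} (hM : M.PosDef)
    (v α : Fin m → ℝ) :
    2 * (α ⬝ᵥ v) - α ⬝ᵥ (M *ᵥ α) ≤ v ⬝ᵥ (M⁻¹ *ᵥ v) := by
  have hdet : IsUnit M.det := (Ne.isUnit hM.det_pos.ne')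
  set w := M⁻¹ *ᵥ v with hw
  have hMw : M *ᵥ w = v := by
    rw [hw, Matrix.mulVec_mulVec, Matrix.mul_nonsing_inv M hdet, Matrix.one_mulVec]
  have h0 := hM.posSemidef.dotProduct_mulVec_nonneg (α - w)
  rw [star_trivial, Matrix.mulVec_sub, sub_dotProduct, dotProduct_sub,
    dotProduct_sub, hMw] at h0
  have hsym : w ⬝ᵥ (M *ᵥ α) = v ⬝ᵥ α := by
    rw [Matrix.dotProduct_mulVec, ← Matrix.mulVec_transpose]
    have : Mᵀ = M := by
      have := hM.isHermitian
      rwa [Matrix.IsHermitian, Matrix.conjTranspose_eq_transpose_of_trivial] at this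
    rw [this, hMw]
  have hcv : α ⬝ᵥ v = v ⬝ᵥ α := dotProduct_comm _ _
  have hwv : w ⬝ᵥ v = v ⬝ᵥ w := dotProduct_comm _ _
  linarith

lemma quad_eq {m : ℕ} {M : Matrix (Fin m) (Fin m) ℝ} (hM : M.PosDef) (v : Fin m → ℝ) :
    2 * ((M⁻¹ *ᵥ v) ⬝ᵥ v) - (M⁻¹ *ᵥ v) ⬝ᵥ (M *ᵥ (M⁻¹ *ᵥ v)) = v ⬝ᵥ (M⁻¹ *ᵥ v) := by
  have hdet : IsUnit M.det := (Ne.isUnit hM.det_pos.ne')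
  have hMw : M *ᵥ (M⁻¹ *ᵥ v) = v := by
    rw [Matrix.mulVec_mulVec, Matrix.mul_nonsing_inv M hdet, Matrix.one_mulVec]
  rw [hMw, dotProduct_comm]
  ring

lemma sum_castLE {t m : ℕ} (htm : t ≤ m) (g : Fin m → ℝ)
    (hg : ∀ i : Fin m, t ≤ i.1 → g i = 0) :
    ∑ i, g i = ∑ j : Fin t, g (Fin.castLE htm j) := by
  classical
  have h1 : ∑ j : Fin t, g (Fin.castLE htm j)
      = ∑ i ∈ Finset.univ.image (Fin.castLE htm), g i :=
    (Finset.sum_image (fun a _ b _ h => Fin.castLE_injective htm h)).symm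
  rw [h1]
  refine (Finset.sum_subset (Finset.subset_univ _) ?_).symm
  intro i _ hi
  refine hg i ?_
  by_contra h
  push_neg at h
  exact hi (Finset.mem_image.mpr ⟨⟨i.1, h⟩, Finset.mem_univ _, rfl⟩)

/-- extension of a vector by zeros -/
def extz {t m : ℕ} (htm : t ≤ m) (α : Fin t → ℝ) : Fin m → ℝ :=
  fun i => if h : i.1 < t then α ⟨i.1, h⟩ else 0

lemma extz_castLE {t m : ℕ} (htm : t ≤ m) (α : Fin t → ℝ) (j : Fin t) :
    extz htm α (Fin.castLE htm j) = α j := by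
  simp [extz, j.isLt]

lemma extz_zero {t m : ℕ} (htm : t ≤ m) (α : Fin t → ℝ) (i : Fin m) (hi : t ≤ i.1) :
    extz htm α i = 0 := by
  simp [extz, Nat.not_lt.mpr hi]

lemma quad_mono_general {t m : ℕ} (htm : t ≤ m)
    {Mt : Matrix (Fin t) (Fin t) ℝ} {Mm : Matrix (Fin m) (Fin m) ℝ}
    (hPDt : Mt.PosDef) (hPDm : Mm.PosDef)
    {vt : Fin t → ℝ} {vm : Fin m → ℝ}
    (hM : ∀ i j : Fin t, Mm (Fin.castLE htm i) (Fin.castLE htm j) = Mt i j)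
    (hv : ∀ j : Fin t, vm (Fin.castLE htm j) = vt j) :
    vt ⬝ᵥ (Mt⁻¹ *ᵥ vt) ≤ vm ⬝ᵥ (Mm⁻¹ *ᵥ vm) := by
  set α := Mt⁻¹ *ᵥ vt with hα
  have hd1 : extz htm α ⬝ᵥ vm = α ⬝ᵥ vt := by
    rw [dotProduct, sum_castLE htm _ (fun i hi => by rw [extz_zero htm α i hi, zero_mul])]
    exact Finset.sum_congr rfl fun j _ => by rw [extz_castLE, hv]
  have hmv : ∀ j : Fin t, (Mm *ᵥ extz htm α) (Fin.castLE htm j) = (Mt *ᵥ α) j := by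
    intro j
    show (Mm (Fin.castLE htm j)) ⬝ᵥ extz htm α = (Mt j) ⬝ᵥ α
    rw [dotProduct, sum_castLE htm _ (fun i hi => by rw [extz_zero htm α i hi, mul_zero])]
    exact Finset.sum_congr rfl fun i _ => by rw [extz_castLE, hM]
  have hd2 : extz htm α ⬝ᵥ (Mm *ᵥ extz htm α) = α ⬝ᵥ (Mt *ᵥ α) := by
    rw [dotProduct, sum_castLE htm _
      (fun i hi => by rw [extz_zero htm α i hi, zero_mul])]
    exact Finset.sum_congr rfl fun j _ => by rw [extz_castLE, hmv]
  have h1 := quad_le hPDm vm (extz htm α)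
  rw [hd1, hd2] at h1
  have h2 : 2 * (α ⬝ᵥ vt) - α ⬝ᵥ (Mt *ᵥ α) = vt ⬝ᵥ (Mt⁻¹ *ᵥ vt) := by
    have := quad_eq hPDt vt
    rw [hα]
    linarith [this]
  linarith

lemma M_entry (k : 𝒳 → 𝒳 → ℝ) (xs : ℕ → 𝒳) (l : ℝ) {m : ℕ} (a b : Fin m) :
    (gramMat k (preT xs m) + l • (1 : Matrix (Fin m) (Fin m) ℝ)) a b
      = k (xs a.1) (xs b.1) + (if a = b then l else 0) := by
  simp [gramMat, preT, Matrix.add_apply, Matrix.smul_apply, Matrix.one_apply, mul_ite]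

lemma quadform_mono (k : 𝒳 → 𝒳 → ℝ) (hk : IsKernel k) (xs : ℕ → 𝒳)
    {l : ℝ} (hl : 0 < l) {t m : ℕ} (htm : t ≤ m) (x : 𝒳) :
    kVec k (preT xs t) x ⬝ᵥ
        ((gramMat k (preT xs t) + l • (1 : Matrix (Fin t) (Fin t) ℝ))⁻¹ *ᵥ kVec k (preT xs t) x)
      ≤ kVec k (preT xs m) x ⬝ᵥ
        ((gramMat k (preT xs m) + l • (1 : Matrix (Fin m) (Fin m) ℝ))⁻¹ *ᵥ kVec k (preT xs m) x) := by
  refine quad_mono_general htm (posDef_M k hk _ hl) (posDef_M k hk _ hl) ?_ ?_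
  · intro i j
    rw [M_entry, M_entry]
    simp [Fin.ext_iff]
  · intro j
    rfl

lemma postVar_mono (k : 𝒳 → 𝒳 → ℝ) (hk : IsKernel k) (xs : ℕ → 𝒳)
    {l : ℝ} (hl : 0 < l) {t m : ℕ} (htm : t ≤ m) (x : 𝒳) :
    postVar k (l • (1 : Matrix (Fin m) (Fin m) ℝ)) (preT xs m) x
      ≤ postVar k (l • (1 : Matrix (Fin t) (Fin t) ℝ)) (preT xs t) x := by
  have := quadform_mono k hk xs hl htm x
  unfold postVar
  linarith

lemma quadform_le_k (k : 𝒳 → 𝒳 → ℝ) (hk : IsKernel k) {m : ℕ} (X : Fin m → 𝒳)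
    {l : ℝ} (hl : 0 < l) (x : 𝒳) :
    kVec k X x ⬝ᵥ ((gramMat k X + l • (1 : Matrix (Fin m) (Fin m) ℝ))⁻¹ *ᵥ kVec k X x)
      ≤ k x x := by
  set v := kVec k X x with hv
  set M := gramMat k X + l • (1 : Matrix (Fin m) (Fin m) ℝ) with hM
  have hPD : M.PosDef := posDef_M k hk X hl
  set α := M⁻¹ *ᵥ v with hα
  have hval : v ⬝ᵥ (M⁻¹ *ᵥ v) = 2 * (α ⬝ᵥ v) - α ⬝ᵥ (M *ᵥ α) := by
    have h := quad_eq hPD v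
    rw [hα]
    linarith [h]
  have hMG : α ⬝ᵥ (M *ᵥ α) = α ⬝ᵥ (gramMat k X *ᵥ α) + l * (α ⬝ᵥ α) := by
    rw [hM, Matrix.add_mulVec, dotProduct_add, Matrix.smul_mulVec,
      Matrix.one_mulVec, dotProduct_smul, smul_eq_mul]
  have e1 : α ⬝ᵥ (gramMat k X *ᵥ α) = ∑ i, α i * (∑ j, k (X i) (X j) * α j) := by
    simp [Matrix.mulVec, dotProduct, gramMat]
  have e2 : α ⬝ᵥ v = ∑ i, α i * k (X i) x := by
    simp only [dotProduct, hv, kVec]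
    exact Finset.sum_congr rfl fun i _ => by rw [hk.1 x (X i)]
  have e3 : ∑ j, k x (X j) * α j = α ⬝ᵥ v := by
    rw [e2]
    exact Finset.sum_congr rfl fun j _ => by rw [hk.1 x (X j), mul_comm]
  have hexp : (Fin.snoc α (-1:ℝ)) ⬝ᵥ (gramMat k (Fin.snoc X x) *ᵥ (Fin.snoc α (-1:ℝ)))
      = α ⬝ᵥ (gramMat k X *ᵥ α) - 2*(α ⬝ᵥ v) + k x x := by
    have hrow : ∀ i : Fin (m+1), (gramMat k (Fin.snoc X x) *ᵥ Fin.snoc α (-1:ℝ)) i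
        = (∑ j : Fin m, k ((Fin.snoc X x : Fin (m+1) → 𝒳) i) (X j) * α j) - k ((Fin.snoc X x : Fin (m+1) → 𝒳) i) x := by
      intro i
      simp only [Matrix.mulVec, dotProduct, gramMat, Matrix.of_apply]
      rw [Fin.sum_univ_castSucc]
      simp only [Fin.snoc_castSucc, Fin.snoc_last]
      ring
    rw [dotProduct, Fin.sum_univ_castSucc]
    simp only [hrow, Fin.snoc_castSucc, Fin.snoc_last]
    simp only [mul_sub, Finset.sum_sub_distrib]
    rw [← e1, ← e2, e3]
    ring
  have h0 : 0 ≤ α ⬝ᵥ (gramMat k X *ᵥ α) - 2*(α ⬝ᵥ v) + k x x := by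
    have h := (hk.2 (m+1) (Fin.snoc X x)).dotProduct_mulVec_nonneg (Fin.snoc α (-1:ℝ))
    rw [star_trivial, hexp] at h
    exact h
  have hαα : 0 ≤ α ⬝ᵥ α := Finset.sum_nonneg fun i _ => mul_self_nonneg (α i)
  nlinarith [mul_nonneg hl.le hαα]

lemma postVar_nonneg (k : 𝒳 → 𝒳 → ℝ) (hk : IsKernel k) {m : ℕ} (X : Fin m → 𝒳)
    {l : ℝ} (hl : 0 < l) (x : 𝒳) :
    0 ≤ postVar k (l • (1 : Matrix (Fin m) (Fin m) ℝ)) X x := by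
  have := quadform_le_k k hk X hl x
  unfold postVar
  linarith

lemma det_M_succ (k : 𝒳 → 𝒳 → ℝ) (hk : IsKernel k) (xs : ℕ → 𝒳) {l : ℝ} (hl : 0 < l)
    (t : ℕ) :
    (gramMat k (preT xs (t+1)) + l • (1 : Matrix (Fin (t+1)) (Fin (t+1)) ℝ)).det
      = (gramMat k (preT xs t) + l • (1 : Matrix (Fin t) (Fin t) ℝ)).det
        * (l + postVar k (l • (1 : Matrix (Fin t) (Fin t) ℝ)) (preT xs t) (xs t)) := by
  set A := gramMat k (preT xs t) + l • (1 : Matrix (Fin t) (Fin t) ℝ) with hA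
  set v := kVec k (preT xs t) (xs t) with hv
  have hPD : A.PosDef := posDef_M k hk _ hl
  letI : Invertible A := A.invertibleOfIsUnitDet (Ne.isUnit hPD.det_pos.ne')
  have hblock : (gramMat k (preT xs (t+1))
        + l • (1 : Matrix (Fin (t+1)) (Fin (t+1)) ℝ)).submatrix
        (finSumFinEquiv : Fin t ⊕ Fin 1 ≃ Fin (t+1))
        (finSumFinEquiv : Fin t ⊕ Fin 1 ≃ Fin (t+1))
      = Matrix.fromBlocks A
          (Matrix.of fun i (_ : Fin 1) => v i)
          (Matrix.of fun (_ : Fin 1) j => v j)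
          (Matrix.of fun (_ : Fin 1) (_ : Fin 1) => l + k (xs t) (xs t)) := by
    ext i j
    cases i with
    | inl i =>
      cases j with
      | inl j =>
        simp only [Matrix.submatrix_apply, finSumFinEquiv_apply_left,
          Matrix.fromBlocks_apply₁₁, M_entry, hA]
        simp [Fin.ext_iff]
      | inr j =>
        simp only [Matrix.submatrix_apply, finSumFinEquiv_apply_left,
          finSumFinEquiv_apply_right, Matrix.fromBlocks_apply₁₂, M_entry, Matrix.of_apply,
          hv, kVec, preT]
        rw [if_neg (by simp [Fin.ext_iff]; omega)]
        simp [Fin.ext_iff, Fin.val_eq_zero j, hk.1 (xs i.1) (xs t)]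
    | inr i =>
      cases j with
      | inl j =>
        simp only [Matrix.submatrix_apply, finSumFinEquiv_apply_left,
          finSumFinEquiv_apply_right, Matrix.fromBlocks_apply₂₁, M_entry, Matrix.of_apply,
          hv, kVec, preT]
        rw [if_neg (by simp [Fin.ext_iff]; omega)]
        simp [Fin.val_eq_zero i]
      | inr j =>
        simp only [Matrix.submatrix_apply, finSumFinEquiv_apply_right,
          Matrix.fromBlocks_apply₂₂, M_entry, Matrix.of_apply]
        rw [if_pos (by rw [Subsingleton.elim i j])]
        simp [Fin.val_eq_zero i, Fin.val_eq_zero j]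
        ring
  have hdet := Matrix.det_submatrix_equiv_self
    (finSumFinEquiv : Fin t ⊕ Fin 1 ≃ Fin (t+1))
    (gramMat k (preT xs (t+1)) + l • (1 : Matrix (Fin (t+1)) (Fin (t+1)) ℝ))
  rw [hblock] at hdet
  rw [← hdet, Matrix.det_fromBlocks₁₁, Matrix.invOf_eq_nonsing_inv]
  congr 1
  rw [Matrix.det_fin_one]
  have hentry : ((Matrix.of fun (_ : Fin 1) j => v j) * A⁻¹
      * (Matrix.of fun i (_ : Fin 1) => v i)) 0 0 = v ⬝ᵥ (A⁻¹ *ᵥ v) := by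
    simp only [Matrix.mul_apply, Matrix.of_apply, dotProduct, Matrix.mulVec,
      Finset.sum_mul, Finset.mul_sum]
    rw [Finset.sum_comm]
    exact Finset.sum_congr rfl fun i _ => Finset.sum_congr rfl fun j _ => by ring
  simp only [Matrix.sub_apply, Matrix.of_apply, hentry]
  unfold postVar
  rw [← hA, ← hv]
  ring


end MVRAuxiliary

set_option maxHeartbeats 2000000

/-- RKHS-norm-free simple regret of MVR with rescaled noise
parameter `λ = √c / B`; the bound does not depend on `B`. -/
theorem mvr_simple_regret_rkhs_norm_free
    {𝒳 : Type u} (k : 𝒳 → 𝒳 → ℝ) (hk : IsKernel k)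
    (B c ρ w : ℝ) (hB : 0 < B) (hc : 0 < c) (hρ : 0 ≤ ρ) (hw : 0 ≤ w)
    (T : ℕ) (hT : 0 < T)
    (lam : ℝ) (hlam : lam = Real.sqrt c / B)
    (sβ : ℝ) (hsβ : sβ = B + (ρ / lam) * w)
    (xs : ℕ → 𝒳)
    (hMVR : ∀ t < T, ∀ x : 𝒳,
      postStd k ((lam ^ 2) • (1 : Matrix (Fin t) (Fin t) ℝ)) (preT xs t) x
        ≤ postStd k ((lam ^ 2) • (1 : Matrix (Fin t) (Fin t) ℝ)) (preT xs t) (xs t))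
    (γ : ℝ) (hγ0 : 0 ≤ γ)
    (hγ : ∀ Z : Fin T → 𝒳,
      infoGain k ((lam ^ 2) • (1 : Matrix (Fin T) (Fin T) ℝ)) Z ≤ γ)
    (hbig : (T : ℝ) / 2 ≥ 3 * γ)
    (y : Fin T → ℝ) (f : 𝒳 → ℝ)
    (hconf : ∀ x : 𝒳,
      |f x - postMean k ((lam ^ 2) • (1 : Matrix (Fin T) (Fin T) ℝ)) (preT xs T) y x|
        ≤ sβ * postStd k ((lam ^ 2) • (1 : Matrix (Fin T) (Fin T) ℝ)) (preT xs T) x)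
    (xhat : 𝒳)
    (hxhat : ∀ x : 𝒳,
      postMean k ((lam ^ 2) • (1 : Matrix (Fin T) (Fin T) ℝ)) (preT xs T) y x
        ≤ postMean k ((lam ^ 2) • (1 : Matrix (Fin T) (Fin T) ℝ)) (preT xs T) y xhat)
    (xstar : 𝒳) :
    f xstar - f xhat
      ≤ 8 * (Real.sqrt c + ρ * w) * Real.sqrt (γ / T) := by
  classical
  have hsc : 0 < Real.sqrt c := Real.sqrt_pos.mpr hc
  have hlam0 : 0 < lam := by rw [hlam]; positivity
  set l := lam ^ 2 with hl2
  have hl : 0 < l := by positivity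
  obtain ⟨Tm, rfl⟩ : ∃ Tm, T = Tm + 1 := ⟨T - 1, (Nat.succ_pred_eq_of_pos hT).symm⟩
  set V := postVar k (l • (1 : Matrix (Fin Tm) (Fin Tm) ℝ)) (preT xs Tm) (xs Tm) with hV
  have hV0 : 0 ≤ V := postVar_nonneg k hk _ hl _
  -- MVR in variance form
  have hMVRvar : ∀ t, t < Tm + 1 → ∀ x : 𝒳,
      postVar k (l • (1 : Matrix (Fin t) (Fin t) ℝ)) (preT xs t) x
        ≤ postVar k (l • (1 : Matrix (Fin t) (Fin t) ℝ)) (preT xs t) (xs t) := by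
    intro t ht x
    have h1 := hMVR t ht x
    have h2 := postVar_nonneg k hk (preT xs t) hl x
    have h3 := postVar_nonneg k hk (preT xs t) hl (xs t)
    unfold postStd at h1
    nlinarith [Real.sq_sqrt h2, Real.sq_sqrt h3,
      Real.sqrt_nonneg (postVar k (l • (1 : Matrix (Fin t) (Fin t) ℝ)) (preT xs t) x)]
  have hstep : ∀ t, t ≤ Tm →
      V ≤ postVar k (l • (1 : Matrix (Fin t) (Fin t) ℝ)) (preT xs t) (xs t) := by
    intro t ht
    calc V ≤ postVar k (l • (1 : Matrix (Fin t) (Fin t) ℝ)) (preT xs t) (xs Tm) :=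
        postVar_mono k hk xs hl ht (xs Tm)
      _ ≤ _ := hMVRvar t (by omega) (xs Tm)
  -- determinant lower bound by induction
  have hdetge : ∀ t, t ≤ Tm + 1 →
      (l + V) ^ t ≤ (gramMat k (preT xs t) + l • (1 : Matrix (Fin t) (Fin t) ℝ)).det := by
    intro t
    induction t with
    | zero => intro _; simp [Matrix.det_isEmpty]
    | succ n ih =>
      intro hn
      rw [det_M_succ k hk xs hl n, pow_succ]
      have h1 := ih (by omega)
      have h2 : l + V ≤ l + postVar k (l • (1 : Matrix (Fin n) (Fin n) ℝ)) (preT xs n) (xs n) := by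
        have := hstep n (by omega); linarith
      exact mul_le_mul h1 h2 (by linarith) (posDef_M k hk _ hl).det_pos.le
  -- information gain
  have hIG := hγ (preT xs (Tm + 1))
  unfold infoGain at hIG
  have hcomm : ((l • (1 : Matrix (Fin (Tm+1)) (Fin (Tm+1)) ℝ)) + gramMat k (preT xs (Tm+1)))
      = gramMat k (preT xs (Tm+1)) + l • (1 : Matrix (Fin (Tm+1)) (Fin (Tm+1)) ℝ) :=
    add_comm _ _
  rw [hcomm] at hIG
  have hdetS : ((l : ℝ) • (1 : Matrix (Fin (Tm+1)) (Fin (Tm+1)) ℝ)).det = l ^ (Tm+1) := by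
    simp [Matrix.det_smul]
  rw [hdetS] at hIG
  set DT := (gramMat k (preT xs (Tm+1)) + l • (1 : Matrix (Fin (Tm+1)) (Fin (Tm+1)) ℝ)).det
    with hDT
  have hDTpos : 0 < DT := (posDef_M k hk _ hl).det_pos
  have hDTge : (l + V) ^ (Tm + 1) ≤ DT := hdetge (Tm + 1) le_rfl
  have hlpow : (0:ℝ) < l ^ (Tm + 1) := pow_pos hl _
  set TR : ℝ := (Tm : ℝ) + 1 with hTR
  have hTRpos : (0:ℝ) < TR := by positivity
  have hcast : ((Tm + 1 : ℕ) : ℝ) = TR := by push_cast [hTR]; ring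
  -- log bound
  have hratio : ((l + V) / l) ^ (Tm + 1) ≤ DT / l ^ (Tm + 1) := by
    rw [div_pow]
    gcongr
  have hlog1 : Real.log (((l + V) / l) ^ (Tm + 1)) ≤ Real.log (DT / l ^ (Tm + 1)) :=
    Real.log_le_log (by positivity) hratio
  rw [Real.log_pow] at hlog1
  have hlogbound : TR * Real.log ((l + V) / l) ≤ 2 * γ := by
    rw [← hcast]
    push_cast
    nlinarith [hlog1, hIG]
  set u : ℝ := V / l with hu
  have hu0 : 0 ≤ u := by positivity
  have h1u : (l + V) / l = 1 + u := by rw [hu, add_div, div_self hl.ne']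
  rw [h1u] at hlogbound
  set s : ℝ := 2 * γ / TR with hs
  have hs0 : 0 ≤ s := by positivity
  have hbig' : 3 * γ ≤ TR / 2 := by rw [hTR]; push_cast at hbig; linarith
  have hs13 : s ≤ 1 / 3 := by
    rw [hs, div_le_iff₀ hTRpos]
    linarith
  have hlogs : Real.log (1 + u) ≤ s := by
    rw [hs, le_div_iff₀ hTRpos]
    linarith [hlogbound]
  have hue : 1 + u ≤ Real.exp s :=
    calc 1 + u = Real.exp (Real.log (1 + u)) := (Real.exp_log (by linarith)).symm
      _ ≤ Real.exp s := Real.exp_le_exp.mpr hlogs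
  have h2s : 0 < 1 - s := by linarith
  have hexps : Real.exp s ≤ 1 / (1 - s) := by
    have h1 : 1 - s ≤ Real.exp (-s) := by
      have := Real.add_one_le_exp (-s); linarith
    rw [Real.exp_neg] at h1
    have h3 : 0 < Real.exp s := Real.exp_pos s
    rw [le_div_iff₀ h2s]
    calc Real.exp s * (1 - s) ≤ Real.exp s * (Real.exp s)⁻¹ := by nlinarith
      _ = 1 := mul_inv_cancel₀ h3.ne'
  have hub : u ≤ 3 * γ / TR := by
    have h4 : u ≤ s / (1 - s) := by
      have h5 : (1:ℝ) / (1 - s) - 1 = s / (1 - s) := by field_simp; ring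
      have := hue.trans hexps
      linarith
    have h6 : s / (1 - s) ≤ (3/2) * s := by
      rw [div_le_iff₀ h2s]
      nlinarith
    have h7 : (3/2) * s = 3 * γ / TR := by rw [hs]; field_simp
    linarith
  have hVb : V ≤ 4 * l * γ / TR := by
    have h9 : V = u * l := by rw [hu]; field_simp
    have h8 : u * l ≤ (3 * γ / TR) * l := mul_le_mul_of_nonneg_right hub hl.le
    have h10 : (3 * γ / TR) * l ≤ 4 * l * γ / TR := by
      have hp : 0 ≤ l * γ / TR := by positivity
      have e1 : (3 * γ / TR) * l = 3 * (l * γ / TR) := by ring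
      have e2 : 4 * l * γ / TR = 4 * (l * γ / TR) := by ring
      rw [e1, e2]; linarith
    linarith
  have hstdb : ∀ x : 𝒳,
      postStd k (l • (1 : Matrix (Fin (Tm+1)) (Fin (Tm+1)) ℝ)) (preT xs (Tm+1)) x
        ≤ 2 * lam * Real.sqrt (γ / TR) := by
    intro x
    have ha : postVar k (l • (1 : Matrix (Fin (Tm+1)) (Fin (Tm+1)) ℝ)) (preT xs (Tm+1)) x
        ≤ V := by
      calc postVar k (l • (1 : Matrix (Fin (Tm+1)) (Fin (Tm+1)) ℝ)) (preT xs (Tm+1)) x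
          ≤ postVar k (l • (1 : Matrix (Fin Tm) (Fin Tm) ℝ)) (preT xs Tm) x :=
            postVar_mono k hk xs hl (Nat.le_succ Tm) x
        _ ≤ V := hMVRvar Tm (by omega) x
    have hb2 : postVar k (l • (1 : Matrix (Fin (Tm+1)) (Fin (Tm+1)) ℝ)) (preT xs (Tm+1)) x
        ≤ 4 * l * γ / TR := le_trans ha hVb
    unfold postStd
    calc Real.sqrt (postVar k (l • (1 : Matrix (Fin (Tm+1)) (Fin (Tm+1)) ℝ)) (preT xs (Tm+1)) x)
        ≤ Real.sqrt (4 * l * γ / TR) := Real.sqrt_le_sqrt hb2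
      _ = 2 * lam * Real.sqrt (γ / TR) := by
        rw [hl2, show (4:ℝ) * lam ^ 2 * γ / TR = (2 * lam) ^ 2 * (γ / TR) by ring,
          Real.sqrt_mul (by positivity), Real.sqrt_sq (by positivity)]
  have h1 := hconf xstar
  have h2 := hconf xhat
  have h3 := hxhat xstar
  rw [abs_le] at h1 h2
  have hsβ0 : 0 ≤ sβ := by
    rw [hsβ]
    have : 0 ≤ ρ / lam * w := by positivity
    linarith
  have hse1 := hstdb xstar
  have hse2 := hstdb xhat
  have key : f xstar - f xhat
      ≤ sβ * (2 * lam * Real.sqrt (γ / TR)) + sβ * (2 * lam * Real.sqrt (γ / TR)) := by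
    have m1 := mul_le_mul_of_nonneg_left hse1 hsβ0
    have m2 := mul_le_mul_of_nonneg_left hse2 hsβ0
    linarith [h1.2, h2.1, h3]
  have hsl : sβ * lam = Real.sqrt c + ρ * w := by
    rw [hsβ, hlam]
    field_simp
  have hfin : sβ * (2 * lam * Real.sqrt (γ / TR)) + sβ * (2 * lam * Real.sqrt (γ / TR))
      = 4 * (Real.sqrt c + ρ * w) * Real.sqrt (γ / TR) := by
    rw [← hsl]; ring
  have hgoalcast : ((Tm + 1 : ℕ) : ℝ) = TR := hcast
  rw [hgoalcast]
  have hpos : 0 ≤ (Real.sqrt c + ρ * w) * Real.sqrt (γ / TR) := by positivity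
  linarith [key, hfin, hpos]
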